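/- The relation s → s' defined by ψ_π(s,s') ≥ 1/2 is not transitive in general: there exists a Markov chain (with a uniformly random initial state among three states) and states s₁, s₂, s₃ with s₁ → s₂, s₂ → s₃, and s₃ → s₁ (so that s₁ → s₃ fails). -/
import Mathlib


open Finset

/-- `#(s→s')`: number of index pairs `t < t'` with `τ t = s` and `τ t' = s'`. -/
def pairCount {T : ℕ} (τ : Fin T → Fin 3) (s s' : Fin 3) : ℕ :=
  ((Finset.univ : Finset (Fin T × Fin T)).filter
    (fun p => p.1 < p.2 ∧ τ p.1 = s ∧ τ p.2 = s')).card

/-- Precedence estimator for a distribution `w` over length-`T` trajectories: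
the probability that `s` precedes `s'` among pairs of occurrences. -/
noncomputable def psi {T : ℕ} (w : (Fin T → Fin 3) → ℝ) (s s' : Fin 3) : ℝ :=
  (∑ τ : Fin T → Fin 3, w τ * (pairCount τ s s' : ℝ)) /
    (∑ τ : Fin T → Fin 3, w τ * ((pairCount τ s s' : ℝ) + (pairCount τ s' s : ℝ)))

/-- The trajectory `0,1,2`. -/
def ta : Fin 3 → Fin 3 := ![0,1,2]
/-- The trajectory `1,2,0`. -/
def tb : Fin 3 → Fin 3 := ![1,2,0]
/-- The trajectory `2,0,1`. -/
def tc : Fin 3 → Fin 3 := ![2,0,1]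

/-- Distribution of the deterministic 3-cycle with uniform start: each of the
three cyclic orderings has probability `1/3`. -/
noncomputable def W : (Fin 3 → Fin 3) → ℝ := fun τ =>
  ((if τ = ta then 1 else 0) + (if τ = tb then 1 else 0) + (if τ = tc then 1 else 0)) / 3

lemma sumW (g : (Fin 3 → Fin 3) → ℝ) :
    ∑ τ : Fin 3 → Fin 3, W τ * g τ = (g ta + g tb + g tc) / 3 := by
  simp only [W, div_mul_eq_mul_div, add_mul, ite_mul, one_mul, zero_mul]
  rw [← Finset.sum_div, Finset.sum_add_distrib, Finset.sum_add_distrib]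
  simp only [Finset.sum_ite_eq', Finset.mem_univ, if_true]

lemma ddd (a b : ℝ) : (a/3)/(b/3) = a/b := by
  rcases eq_or_ne b 0 with h | h
  · simp [h]
  · field_simp

lemma psiW (s s' : Fin 3) : psi W s s' =
    ((pairCount ta s s' + pairCount tb s s' + pairCount tc s s' : ℕ) : ℝ) /
    (((pairCount ta s s' + pairCount tb s s' + pairCount tc s s' : ℕ) : ℝ) +
     ((pairCount ta s' s + pairCount tb s' s + pairCount tc s' s : ℕ) : ℝ)) := by
  rw [psi, sumW, sumW, ddd]
  push_cast
  ring_nf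

/-- the relation `s → s'` defined by `ψ(s,s') ≥ 1/2` is not
transitive in general: there is a distribution over length-3 trajectories on three
states (the three cyclic orderings of `(s₁,s₂,s₃)`, each with probability `1/3`,
as generated by the deterministic 3-cycle with uniform initial state) with
`s₁ → s₂`, `s₂ → s₃`, `s₃ → s₁`, and `s₁ → s₃` fails. -/
theorem arrow_not_transitive :
    ∃ w : (Fin 3 → Fin 3) → ℝ, (∀ τ, 0 ≤ w τ) ∧ (∑ τ : Fin 3 → Fin 3, w τ = 1) ∧
      ∃ s₁ s₂ s₃ : Fin 3, s₁ ≠ s₂ ∧ s₂ ≠ s₃ ∧ s₁ ≠ s₃ ∧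
        psi w s₁ s₂ ≥ 1 / 2 ∧ psi w s₂ s₃ ≥ 1 / 2 ∧ psi w s₃ s₁ ≥ 1 / 2 ∧
          ¬ psi w s₁ s₃ ≥ 1 / 2 := by
  refine ⟨W, ?_, ?_, 0, 1, 2, by decide, by decide, by decide, ?_, ?_, ?_, ?_⟩
  · intro τ
    unfold W
    positivity
  · have h := sumW (fun _ => 1)
    simp only [mul_one] at h
    rw [h]
    norm_num
  all_goals rw [psiW]
  · rw [show pairCount ta 0 1 = 1 from by decide, show pairCount tb 0 1 = 0 from by decide,
      show pairCount tc 0 1 = 1 from by decide, show pairCount ta 1 0 = 0 from by decide,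
      show pairCount tb 1 0 = 1 from by decide, show pairCount tc 1 0 = 0 from by decide]
    norm_num
  · rw [show pairCount ta 1 2 = 1 from by decide, show pairCount tb 1 2 = 1 from by decide,
      show pairCount tc 1 2 = 0 from by decide, show pairCount ta 2 1 = 0 from by decide,
      show pairCount tb 2 1 = 0 from by decide, show pairCount tc 2 1 = 1 from by decide]
    norm_num
  · rw [show pairCount ta 2 0 = 0 from by decide, show pairCount tb 2 0 = 1 from by decide,
      show pairCount tc 2 0 = 1 from by decide, show pairCount ta 0 2 = 1 from by decide,
      show pairCount tb 0 2 = 0 from by decide, show pairCount tc 0 2 = 0 from by decide]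
    norm_num
  · rw [show pairCount ta 0 2 = 1 from by decide, show pairCount tb 0 2 = 0 from by decide,
      show pairCount tc 0 2 = 0 from by decide, show pairCount ta 2 0 = 0 from by decide,
      show pairCount tb 2 0 = 1 from by decide, show pairCount tc 2 0 = 1 from by decide]
    norm_num
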